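/- For every finite simple graph G on n vertices, λ(G) ≤ (1 − 1/ω(G))·n, where ω(G) is the clique number of G. Equivalently, if G is K_{r+1}-free then λ(G) ≤ (1 − 1/r)·n. -/

import Mathlib

/-- `G` contains a copy of `H` as a subgraph,
i.e. a subgraph isomorphic to `H`. -/
def HasSubgraphCopy {α β : Type*} (H : SimpleGraph α) (G : SimpleGraph β) : Prop :=
  ∃ f : H →g G, Function.Injective f

lemma adjMatrix_isHermitian {n : ℕ} (G : SimpleGraph (Fin n)) [DecidableRel G.Adj] :
    (G.adjMatrix ℝ).IsHermitian := by
  show Matrix.conjTranspose (G.adjMatrix ℝ) = G.adjMatrix ℝ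
  ext i j
  simp only [Matrix.conjTranspose_apply, SimpleGraph.adjMatrix_apply, star_trivial]
  by_cases h : G.Adj i j
  · simp [h, h.symm]
  · have h' : ¬ G.Adj j i := fun hji => h hji.symm
    simp [h, h']

/-- the adjacency spectral radius of `G`: the largest eigenvalue of the
(real symmetric) adjacency matrix of `G` -/
noncomputable def adjSpectralRadius {n : ℕ} (G : SimpleGraph (Fin n)) : ℝ :=
  letI := Classical.decRel G.Adj
  ⨆ i, (adjMatrix_isHermitian G).eigenvalues i

open Finset Matrix

section aux
variable {n : ℕ} {G : SimpleGraph (Fin n)} [DecidableRel G.Adj]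

/-- the quadratic form of the adjacency matrix -/
def qf (G : SimpleGraph (Fin n)) [DecidableRel G.Adj] (x : Fin n → ℝ) : ℝ :=
  x ⬝ᵥ (G.adjMatrix ℝ *ᵥ x)

lemma qf_expand (x : Fin n → ℝ) :
    qf G x = ∑ k, ∑ l, x k * (G.adjMatrix ℝ k l * x l) := by
  simp [qf, dotProduct, Matrix.mulVec, Finset.mul_sum]

lemma adj_entry_nonneg (k l : Fin n) : (0:ℝ) ≤ G.adjMatrix ℝ k l := by
  rw [SimpleGraph.adjMatrix_apply]; split <;> norm_num

lemma adj_entry_le_one (k l : Fin n) : G.adjMatrix ℝ k l ≤ 1 := by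
  rw [SimpleGraph.adjMatrix_apply]; split <;> norm_num

lemma qf_le_abs (x : Fin n → ℝ) : qf G x ≤ qf G (fun k => |x k|) := by
  rw [qf_expand, qf_expand]
  refine Finset.sum_le_sum fun k _ => Finset.sum_le_sum fun l _ => ?_
  calc x k * (G.adjMatrix ℝ k l * x l) ≤ |x k * (G.adjMatrix ℝ k l * x l)| := le_abs_self _
    _ = |x k| * (G.adjMatrix ℝ k l * |x l|) := by
        rw [abs_mul, abs_mul, abs_of_nonneg (adj_entry_nonneg k l)]

lemma qf_smul (c : ℝ) (x : Fin n → ℝ) : qf G (c • x) = c ^ 2 * qf G x := by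
  simp only [qf, smul_dotProduct, Matrix.mulVec_smul, dotProduct_smul,
    smul_eq_mul]
  ring

lemma qf_le_one_sub_sum_sq (x : Fin n → ℝ) (hx : ∀ i, 0 ≤ x i) (h1 : ∑ i, x i = 1) :
    qf G x ≤ 1 - ∑ i, x i ^ 2 := by
  rw [qf_expand]
  have hstep : ∀ k, ∑ l, x k * (G.adjMatrix ℝ k l * x l)
      ≤ ∑ l, (if l = k then 0 else x k * x l) := by
    intro k
    refine Finset.sum_le_sum fun l _ => ?_
    by_cases h : l = k
    · subst h; simp
    · simp only [if_neg h]
      calc x k * (G.adjMatrix ℝ k l * x l) ≤ x k * (1 * x l) := by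
            apply mul_le_mul_of_nonneg_left (mul_le_mul_of_nonneg_right
              (adj_entry_le_one k l) (hx l)) (hx k)
        _ = x k * x l := by ring
  calc ∑ k, ∑ l, x k * (G.adjMatrix ℝ k l * x l)
      ≤ ∑ k, ∑ l, (if l = k then 0 else x k * x l) :=
        Finset.sum_le_sum fun k _ => hstep k
    _ = ∑ k : Fin n, (x k * 1 - x k ^ 2) := by
        refine Finset.sum_congr rfl fun k _ => ?_
        have : ∀ l, (if l = k then (0:ℝ) else x k * x l)
            = x k * x l - (if l = k then x k * x l else 0) := by
          intro l; split <;> ring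
        simp_rw [this]
        rw [Finset.sum_sub_distrib, Finset.sum_ite_eq' Finset.univ k (fun l => x k * x l),
          if_pos (Finset.mem_univ k), ← Finset.mul_sum, h1]
        ring
    _ = 1 - ∑ i, x i ^ 2 := by
        rw [Finset.sum_sub_distrib]
        simp [h1]

lemma dotProduct_adj_symm (x u : Fin n → ℝ) :
    x ⬝ᵥ (G.adjMatrix ℝ *ᵥ u) = u ⬝ᵥ (G.adjMatrix ℝ *ᵥ x) := by
  rw [Matrix.dotProduct_mulVec, dotProduct_comm]
  congr 1
  conv_lhs => rw [← G.isSymm_adjMatrix.eq]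
  rw [Matrix.vecMul_transpose]

lemma shift_qf {x : Fin n → ℝ} {i j : Fin n}
    (hij : i ≠ j) (hnadj : ¬ G.Adj i j)
    (hw : (G.adjMatrix ℝ *ᵥ x) j ≤ (G.adjMatrix ℝ *ᵥ x) i) (hxj : 0 ≤ x j) :
    qf G x ≤ qf G (x + (Pi.single i (x j) - Pi.single j (x j))) := by
  set A := G.adjMatrix ℝ with hA
  set u : Fin n → ℝ := Pi.single i (x j) - Pi.single j (x j) with hu
  have hAu : ∀ k, (A *ᵥ u) k = A k i * x j - A k j * x j := by
    intro k
    rw [hu, Matrix.mulVec_sub, Matrix.mulVec_single, Matrix.mulVec_single]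
    simp
    ring
  have huAx : u ⬝ᵥ (A *ᵥ x) = x j * ((A *ᵥ x) i - (A *ᵥ x) j) := by
    rw [hu, sub_dotProduct, single_dotProduct, single_dotProduct]
    ring
  have hAii : A i i = 0 := by simp [hA]
  have hAjj : A j j = 0 := by simp [hA]
  have hAij : A i j = 0 := by simp [hA, hnadj]
  have hnadj2 : ¬ G.Adj j i := fun h => hnadj h.symm
  have hAji : A j i = 0 := by simp [hA, hnadj2]
  have huAu : u ⬝ᵥ (A *ᵥ u) = 0 := by
    rw [hu, sub_dotProduct, single_dotProduct, single_dotProduct,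
      ← hu, hAu, hAu, hAii, hAjj, hAij, hAji]
    ring
  have hexp : qf G (x + u) = qf G x + x ⬝ᵥ (A *ᵥ u) + u ⬝ᵥ (A *ᵥ x) + u ⬝ᵥ (A *ᵥ u) := by
    simp only [qf, ← hA, Matrix.mulVec_add, dotProduct_add, add_dotProduct]
    ring
  rw [hexp, dotProduct_adj_symm, huAu, huAx]
  have : 0 ≤ x j * ((A *ᵥ x) i - (A *ᵥ x) j) := mul_nonneg hxj (by linarith)
  linarith

lemma support_nonempty {x : Fin n → ℝ} (h1 : ∑ i, x i = 1) :
    (univ.filter (fun i => x i ≠ 0)).Nonempty := by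
  by_contra h
  rw [Finset.not_nonempty_iff_eq_empty, Finset.filter_eq_empty_iff] at h
  have : ∑ i, x i = 0 := Finset.sum_eq_zero fun i hi => by
    have := h hi; simpa using this
  rw [h1] at this; norm_num at this

lemma ms_aux (N : ℕ) : ∀ x : Fin n → ℝ, (∀ i, 0 ≤ x i) → ∑ i, x i = 1 →
    (univ.filter (fun i => x i ≠ 0)).card ≤ N →
    qf G x ≤ 1 - 1 / (G.cliqueNum : ℝ) := by
  induction N with
  | zero =>
    intro x hx h1 hcard
    obtain ⟨i, hi⟩ := support_nonempty h1
    exact absurd (Finset.card_pos.mpr ⟨i, hi⟩) (by omega)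
  | succ N ih =>
    intro x hx h1 hcard
    set S := univ.filter (fun i => x i ≠ 0) with hS
    by_cases hcl : G.IsClique (S : Set (Fin n))
    · -- clique case
      have hsum : ∑ i ∈ S, x i = 1 := by
        rw [← h1]
        refine Finset.sum_subset (Finset.subset_univ S) fun i _ hi => ?_
        by_contra hne
        exact hi (by simp [hS, hne])
      have hSpos : 0 < S.card := Finset.card_pos.mpr (support_nonempty h1)
      have hcardle : S.card ≤ G.cliqueNum :=
        SimpleGraph.IsClique.card_le_cliqueNum (tc := hcl)
      have hwpos : 0 < G.cliqueNum := lt_of_lt_of_le hSpos hcardle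
      have hcs : (1:ℝ) ≤ (S.card : ℝ) * ∑ i ∈ S, x i ^ 2 := by
        have h := sq_sum_le_card_mul_sum_sq (s := S) (f := x)
        rw [hsum] at h
        simpa using h
      have hsq : (1 : ℝ) / (G.cliqueNum : ℝ) ≤ ∑ i, x i ^ 2 := by
        have h2 : ∑ i ∈ S, x i ^ 2 ≤ ∑ i, x i ^ 2 :=
          Finset.sum_le_sum_of_subset_of_nonneg (Finset.subset_univ S)
            (fun i _ _ => sq_nonneg _)
        have hc0 : (0:ℝ) < (S.card : ℝ) := by exact_mod_cast hSpos
        have hw0 : (0:ℝ) < (G.cliqueNum : ℝ) := by exact_mod_cast hwpos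
        have h3 : (1:ℝ) / (S.card : ℝ) ≤ ∑ i ∈ S, x i ^ 2 := by
          rw [div_le_iff₀ hc0] at *
          linarith [hcs]
        calc (1:ℝ) / (G.cliqueNum:ℝ) ≤ 1 / (S.card:ℝ) := by
              apply one_div_le_one_div_of_le hc0
              exact_mod_cast hcardle
          _ ≤ _ := h3.trans h2
      have := qf_le_one_sub_sum_sq (G := G) x hx h1
      linarith
    · -- non-clique case
      rw [SimpleGraph.isClique_iff, Set.Pairwise] at hcl
      push_neg at hcl
      obtain ⟨i, hi, j, hj, hij, hnadj⟩ := hcl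
      rw [Finset.mem_coe] at hi hj
      have key : ∀ i j : Fin n, i ∈ S → j ∈ S → i ≠ j → ¬ G.Adj i j →
          (G.adjMatrix ℝ *ᵥ x) j ≤ (G.adjMatrix ℝ *ᵥ x) i →
          qf G x ≤ 1 - 1 / (G.cliqueNum : ℝ) := by
        intro i j hi hj hij hnadj hw
        set x' : Fin n → ℝ := x + (Pi.single i (x j) - Pi.single j (x j)) with hx'
        have hx'i : x' i = x i + x j := by
          simp [hx', Pi.single_eq_same, Pi.single_eq_of_ne hij,
            Pi.single_eq_of_ne (Ne.symm hij)]
        have hx'j : x' j = 0 := by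
          simp [hx', Pi.single_eq_same, Pi.single_eq_of_ne hij,
            Pi.single_eq_of_ne (Ne.symm hij)]
        have hx'k : ∀ k, k ≠ i → k ≠ j → x' k = x k := by
          intro k hki hkj
          simp [hx', Pi.single_eq_of_ne hki, Pi.single_eq_of_ne hkj]
        have hx'nonneg : ∀ k, 0 ≤ x' k := by
          intro k
          by_cases hki : k = i
          · subst hki; rw [hx'i]; exact add_nonneg (hx k) (hx j)
          · by_cases hkj : k = j
            · subst hkj; rw [hx'j]
            · rw [hx'k k hki hkj]; exact hx k
        have hx'sum : ∑ k, x' k = 1 := by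
          simp only [hx', Pi.add_apply, Pi.sub_apply]
          rw [Finset.sum_add_distrib, Finset.sum_sub_distrib, h1,
            Finset.sum_pi_single', Finset.sum_pi_single']
          simp
        have hsupp : (univ.filter (fun k => x' k ≠ 0)) ⊆ S.erase j := by
          intro k hk
          rw [Finset.mem_filter] at hk
          have hkj : k ≠ j := by
            rintro rfl; exact hk.2 hx'j
          rw [Finset.mem_erase]
          refine ⟨hkj, ?_⟩
          by_cases hki : k = i
          · subst hki; exact hi
          · rw [hS, Finset.mem_filter]
            exact ⟨Finset.mem_univ k, by rw [← hx'k k hki hkj]; exact hk.2⟩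
        have hcards : (univ.filter (fun k => x' k ≠ 0)).card ≤ N := by
          have h1' := Finset.card_le_card hsupp
          have h2' : (S.erase j).card = S.card - 1 := Finset.card_erase_of_mem hj
          have h3' : 0 < S.card := Finset.card_pos.mpr ⟨j, hj⟩
          omega
        calc qf G x ≤ qf G x' := shift_qf hij hnadj hw (hx j)
          _ ≤ 1 - 1 / (G.cliqueNum : ℝ) := ih x' hx'nonneg hx'sum hcards
      rcases le_total ((G.adjMatrix ℝ *ᵥ x) j) ((G.adjMatrix ℝ *ᵥ x) i) with hw | hw
      · exact key i j hi hj hij hnadj hw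
      · exact key j i hj hi hij.symm (fun h => hnadj h.symm) hw

lemma cliqueNum_pos (hn : 0 < n) : 0 < G.cliqueNum := by
  have h : G.IsClique ({(⟨0, hn⟩ : Fin n)} : Finset (Fin n)) := by
    simp [SimpleGraph.isClique_iff, Set.pairwise_singleton]
  have := SimpleGraph.IsClique.card_le_cliqueNum (tc := h)
  simp at this; omega

lemma cliqueNum_le_of_free {r : ℕ}
    (h : ¬ HasSubgraphCopy (SimpleGraph.completeGraph (Fin (r + 1))) G) : G.cliqueNum ≤ r := by
  by_contra h'
  push_neg at h'
  obtain ⟨s, hs⟩ := G.exists_isNClique_cliqueNum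
  obtain ⟨t, hts, htcard⟩ := Finset.exists_subset_card_eq
    (show r + 1 ≤ s.card by rw [hs.2]; omega)
  have htcl : G.IsClique (t : Set (Fin n)) := hs.1.subset (by exact_mod_cast hts)
  have hcardt : Fintype.card t = r + 1 := by simp [htcard]
  let e : Fin (r + 1) ≃ {x // x ∈ t} := (Fintype.equivFinOfCardEq hcardt).symm
  let f : Fin (r + 1) → Fin n := fun a => (e a : Fin n)
  have hinj : Function.Injective f := fun a b hab => e.injective (Subtype.ext hab)
  refine h ⟨⟨f, ?_⟩, hinj⟩
  intro a b hab
  have hne : a ≠ b := hab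
  exact htcl (e a).2 (e b).2 (fun hc => hne (hinj hc))

lemma spectral_le (hn : 0 < n) :
    (⨆ i, (adjMatrix_isHermitian G).eigenvalues i) ≤ (1 - 1 / (G.cliqueNum : ℝ)) * n := by
  set hA := adjMatrix_isHermitian G
  haveI : Nonempty (Fin n) := ⟨⟨0, hn⟩⟩
  obtain ⟨i0, hi0⟩ := Finite.exists_max (fun i => hA.eigenvalues i)
  refine le_trans (ciSup_le hi0) ?_
  set v : Fin n → ℝ := ⇑(hA.eigenvectorBasis i0) with hv
  have heig : hA.eigenvalues i0 = qf G v := by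
    rw [hA.eigenvalues_eq i0]
    simp [qf, hv]
  have hnorm : ∑ k, v k ^ 2 = 1 := by
    have h := hA.eigenvectorBasis.orthonormal.1 i0
    rw [EuclideanSpace.norm_eq] at h
    have h2 := Real.sqrt_eq_one.mp h
    simpa [Real.norm_eq_abs, sq_abs] using h2
  set y : Fin n → ℝ := fun k => |v k| with hy
  have hynn : ∀ k, 0 ≤ y k := fun k => abs_nonneg _
  have hysq : ∑ k, y k ^ 2 = 1 := by simpa [hy, sq_abs] using hnorm
  set s : ℝ := ∑ k, y k with hsdef
  have hs_sq : s ^ 2 ≤ n := by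
    have h := sq_sum_le_card_mul_sum_sq (s := (univ : Finset (Fin n))) (f := y)
    rw [hysq] at h
    simpa using h
  have hspos : 0 < s := by
    rcases (Finset.sum_nonneg fun k _ => hynn k).lt_or_eq with h | h
    · exact h
    · exfalso
      have hzero : ∀ k ∈ (univ : Finset (Fin n)), y k = 0 :=
        (Finset.sum_eq_zero_iff_of_nonneg fun k _ => hynn k).mp h.symm
      have : ∑ k, y k ^ 2 = 0 := Finset.sum_eq_zero fun k hk => by
        rw [hzero k hk]; ring
      rw [hysq] at this; norm_num at this
  set z : Fin n → ℝ := s⁻¹ • y with hz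
  have hzsum : ∑ k, z k = 1 := by
    simp only [hz, Pi.smul_apply, smul_eq_mul, ← Finset.mul_sum, ← hsdef]
    field_simp
  have hznn : ∀ k, 0 ≤ z k := fun k =>
    mul_nonneg (inv_nonneg.mpr hspos.le) (hynn k)
  have hqz : qf G z ≤ 1 - 1 / (G.cliqueNum : ℝ) :=
    ms_aux (univ.filter (fun k => z k ≠ 0)).card z hznn hzsum le_rfl
  have hyz : y = s • z := by
    rw [hz, smul_smul, mul_inv_cancel₀ hspos.ne', one_smul]
  have hsub : (0:ℝ) ≤ 1 - 1 / (G.cliqueNum : ℝ) := by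
    have h1 : (1:ℝ) ≤ (G.cliqueNum : ℝ) := by exact_mod_cast cliqueNum_pos (G := G) hn
    have : 1 / (G.cliqueNum : ℝ) ≤ 1 := by
      rw [div_le_one (by linarith)]; linarith
    linarith
  calc hA.eigenvalues i0 = qf G v := heig
    _ ≤ qf G y := qf_le_abs v
    _ = s ^ 2 * qf G z := by rw [hyz, qf_smul]
    _ ≤ s ^ 2 * (1 - 1 / (G.cliqueNum : ℝ)) :=
        mul_le_mul_of_nonneg_left hqz (sq_nonneg s)
    _ ≤ (n : ℝ) * (1 - 1 / (G.cliqueNum : ℝ)) := mul_le_mul_of_nonneg_right hs_sq hsub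
    _ = (1 - 1 / (G.cliqueNum : ℝ)) * n := mul_comm _ _

end aux

/-- **Wilf's theorem.** For every graph `G` on `n` vertices,
`λ(G) ≤ (1 − 1/ω(G))·n`; equivalently, if `G` is `K_{r+1}`-free then
`λ(G) ≤ (1 − 1/r)·n`. -/
theorem wilf (n : ℕ) (G : SimpleGraph (Fin n)) :
    adjSpectralRadius G ≤ (1 - 1 / (G.cliqueNum : ℝ)) * n ∧
      ∀ r : ℕ, 1 ≤ r → ¬ HasSubgraphCopy (SimpleGraph.completeGraph (Fin (r + 1))) G →
        adjSpectralRadius G ≤ (1 - 1 / (r : ℝ)) * n := by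
  letI := Classical.decRel G.Adj
  have hsr : adjSpectralRadius G = ⨆ i, (adjMatrix_isHermitian G).eigenvalues i := rfl
  rcases Nat.eq_zero_or_pos n with hn | hn
  · subst hn
    have h0 : adjSpectralRadius G = 0 := by
      rw [hsr]
      exact Real.iSup_of_isEmpty _
    constructor
    · rw [h0]; simp
    · intro r _ _; rw [h0]; simp
  · have h1 : adjSpectralRadius G ≤ (1 - 1 / (G.cliqueNum : ℝ)) * n := by
      rw [hsr]; exact spectral_le hn
    refine ⟨h1, fun r hr hfree => ?_⟩
    have hle : G.cliqueNum ≤ r := cliqueNum_le_of_free hfree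
    refine h1.trans ?_
    have hw1 : (1:ℝ) ≤ (G.cliqueNum : ℝ) := by
      exact_mod_cast cliqueNum_pos (G := G) hn
    have hdiv : 1 / (r : ℝ) ≤ 1 / (G.cliqueNum : ℝ) := by
      apply one_div_le_one_div_of_le (by linarith)
      exact_mod_cast hle
    apply mul_le_mul_of_nonneg_right (by linarith) (by positivity)
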